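/- As k → 1⁻, K(k) ~ log(4/k'), i.e. the quotient K(k)/log(4/k') tends to 1 as k → 1⁻, where k' = √(1−k²). -/

import Mathlib

open Real

/-- Complete elliptic integral of the first kind. -/
noncomputable def EllK (k : ℝ) : ℝ :=
  ∫ θ in (0:ℝ)..(π/2), 1 / Real.sqrt (1 - k^2 * Real.sin θ ^ 2)

/-- Complete elliptic integral of the second kind. -/
noncomputable def EllE (k : ℝ) : ℝ :=
  ∫ θ in (0:ℝ)..(π/2), Real.sqrt (1 - k^2 * Real.sin θ ^ 2)

/-- Complementary complete elliptic integral `K'(k) = K(√(1-k²))`. -/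
noncomputable def EllK' (k : ℝ) : ℝ := EllK (Real.sqrt (1 - k^2))

/-- Complementary elliptic integral of the second kind `E'(k) = E(√(1-k²))`. -/
noncomputable def EllE' (k : ℝ) : ℝ := EllE (Real.sqrt (1 - k^2))

/-- The nome `q = exp(-π K'(k)/K(k))`. -/
noncomputable def nome (k : ℝ) : ℝ := Real.exp (-π * EllK' k / EllK k)

/-- Jacobi's theta function `Θ(u,k) = 1 + 2 ∑_{n≥1} (-1)^n q^{n²} cos(nπu/K)`. -/
noncomputable def JTheta (u k : ℝ) : ℝ :=
  1 + 2 * ∑' n : ℕ, (-1 : ℝ)^(n+1) * nome k ^ ((n+1)^2) *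
    Real.cos (((n:ℝ)+1) * π * u / EllK k)

/-- Jacobi's theta function `H(u,k) = 2 ∑_{n≥0} (-1)^n q^{(n+1/2)²} sin((2n+1)πu/(2K))`. -/
noncomputable def JH (u k : ℝ) : ℝ :=
  2 * ∑' n : ℕ, (-1 : ℝ)^n * nome k ^ ((((n:ℝ) + 1/2)^2)) *
    Real.sin ((2*(n:ℝ)+1) * π * u / (2 * EllK k))

/-- Jacobi's theta function `H₁(u,k) = 2 ∑_{n≥0} q^{(n+1/2)²} cos((2n+1)πu/(2K))`. -/
noncomputable def JH1 (u k : ℝ) : ℝ :=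
  2 * ∑' n : ℕ, nome k ^ ((((n:ℝ) + 1/2)^2)) *
    Real.cos ((2*(n:ℝ)+1) * π * u / (2 * EllK k))

/-- Jacobi's theta function `Θ₁(u,k) = 1 + 2 ∑_{n≥1} q^{n²} cos(nπu/K)`. -/
noncomputable def JTheta1 (u k : ℝ) : ℝ :=
  1 + 2 * ∑' n : ℕ, nome k ^ ((n+1)^2) * Real.cos (((n:ℝ)+1) * π * u / EllK k)

/-- Jacobi's zeta function `zn(u,k) = Θ_u(u,k)/Θ(u,k)`. -/
noncomputable def zn (u k : ℝ) : ℝ := deriv (fun v => JTheta v k) u / JTheta u k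

/-- Jacobi's elliptic sine `sn(u,k) = H(u,k)/(√k Θ(u,k))`. -/
noncomputable def sn (u k : ℝ) : ℝ := JH u k / (Real.sqrt k * JTheta u k)

/-- Jacobi's elliptic cosine `cn(u,k) = √(k'/k) H₁(u,k)/Θ(u,k)`. -/
noncomputable def cn (u k : ℝ) : ℝ :=
  Real.sqrt (Real.sqrt (1 - k^2) / k) * JH1 u k / JTheta u k

/-- Jacobi's delta amplitude `dn(u,k) = √(k') Θ₁(u,k)/Θ(u,k)`. -/
noncomputable def dn (u k : ℝ) : ℝ :=
  Real.sqrt (Real.sqrt (1 - k^2)) * JTheta1 u k / JTheta u k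

lemma ellK_bounds {k : ℝ} (hk0 : 0 < k) (hk1 : k < 1) :
    (1/k) * Real.arsinh (k / Real.sqrt (1 - k^2)) ≤ EllK k ∧
    EllK k ≤ (1/k) * Real.arsinh (k / Real.sqrt (1 - k^2)) + 1/k := by
  have he : (0:ℝ) < 1 - k^2 := by nlinarith
  set c := Real.sqrt (1 - k^2) with hc_def
  have hc : 0 < c := Real.sqrt_pos.2 he
  have hc2 : c^2 = 1 - k^2 := Real.sq_sqrt he.le
  have hD : ∀ θ : ℝ, 0 < (1 - k^2) + k^2 * Real.cos θ ^ 2 := fun θ =>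
    add_pos_of_pos_of_nonneg he (by positivity)
  have hEllK : EllK k = ∫ θ in (0:ℝ)..(π/2),
      1 / Real.sqrt ((1 - k^2) + k^2 * Real.cos θ ^ 2) := by
    have h : ∀ θ : ℝ, 1 - k^2 * Real.sin θ ^ 2 = (1 - k^2) + k^2 * Real.cos θ ^ 2 :=
      fun θ => by nlinarith [Real.sin_sq_add_cos_sq θ]
    simp only [EllK, h]
  have hcontD : Continuous fun θ : ℝ => Real.sqrt ((1 - k^2) + k^2 * Real.cos θ ^ 2) :=
    (continuous_const.add (continuous_const.mul (Real.continuous_cos.pow 2))).sqrt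
  have hDne : ∀ θ : ℝ, Real.sqrt ((1 - k^2) + k^2 * Real.cos θ ^ 2) ≠ 0 :=
    fun θ => (Real.sqrt_pos.2 (hD θ)).ne'
  have hcont1 : Continuous fun θ : ℝ => 1 / Real.sqrt ((1 - k^2) + k^2 * Real.cos θ ^ 2) :=
    continuous_const.div hcontD hDne
  have hcont2 : Continuous fun θ : ℝ =>
      Real.sin θ / Real.sqrt ((1 - k^2) + k^2 * Real.cos θ ^ 2) :=
    Real.continuous_sin.div hcontD hDne
  -- antiderivative
  have hderiv : ∀ θ ∈ Set.uIcc (0:ℝ) (π/2),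
      HasDerivAt (fun θ => -(1/k) * Real.arsinh (k * Real.cos θ / c))
        (Real.sin θ / Real.sqrt ((1 - k^2) + k^2 * Real.cos θ ^ 2)) θ := by
    intro θ _
    have h1 : HasDerivAt (fun θ : ℝ => k * Real.cos θ / c) (k * (-Real.sin θ) / c) θ :=
      ((Real.hasDerivAt_cos θ).const_mul k).div_const c
    have h2 := ((Real.hasDerivAt_arsinh (k * Real.cos θ / c)).comp θ h1).const_mul (-(1/k))
    refine HasDerivAt.congr_deriv h2 ?_
    symm
    have hx : 1 + (k * Real.cos θ / c)^2 = ((1 - k^2) + k^2 * Real.cos θ ^ 2) / c^2 := by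
      field_simp [hc2]
      rw [hc2]
    rw [hx, Real.sqrt_div (hD θ).le, Real.sqrt_sq hc.le]
    field_simp
  have hval : ∫ θ in (0:ℝ)..(π/2),
      Real.sin θ / Real.sqrt ((1 - k^2) + k^2 * Real.cos θ ^ 2)
      = (1/k) * Real.arsinh (k / c) := by
    rw [intervalIntegral.integral_eq_sub_of_hasDerivAt hderiv (hcont2.intervalIntegrable _ _)]
    simp
  constructor
  · rw [hEllK, ← hval]
    apply intervalIntegral.integral_mono_on (by positivity)
      (hcont2.intervalIntegrable _ _) (hcont1.intervalIntegrable _ _)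
    intro θ _
    gcongr
    exact Real.sin_le_one θ
  · rw [hEllK]
    have hub : ∀ θ ∈ Set.Icc (0:ℝ) (π/2),
        1 / Real.sqrt ((1 - k^2) + k^2 * Real.cos θ ^ 2) ≤
        Real.sin θ / Real.sqrt ((1 - k^2) + k^2 * Real.cos θ ^ 2) + Real.cos θ / k := by
      intro θ hθ
      have hs0 : 0 ≤ Real.sin θ := Real.sin_nonneg_of_nonneg_of_le_pi hθ.1
        (le_trans hθ.2 (by linarith [Real.pi_pos]))
      have hs1 : Real.sin θ ≤ 1 := Real.sin_le_one θ
      have hco : 0 ≤ Real.cos θ := Real.cos_nonneg_of_mem_Icc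
        ⟨by linarith [hθ.1, Real.pi_pos], hθ.2⟩
      have hsD : 0 < Real.sqrt ((1 - k^2) + k^2 * Real.cos θ ^ 2) := Real.sqrt_pos.2 (hD θ)
      have hkD : k * Real.cos θ ≤ Real.sqrt ((1 - k^2) + k^2 * Real.cos θ ^ 2) := by
        rw [show k * Real.cos θ = Real.sqrt ((k * Real.cos θ)^2) from
          (Real.sqrt_sq (by positivity)).symm]
        apply Real.sqrt_le_sqrt
        nlinarith
      have key : k * (1 - Real.sin θ) ≤
          Real.cos θ * Real.sqrt ((1 - k^2) + k^2 * Real.cos θ ^ 2) := by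
        have h1 : k * (1 - Real.sin θ) ≤ Real.cos θ * (k * Real.cos θ) := by
          nlinarith [Real.sin_sq_add_cos_sq θ,
            mul_nonneg (mul_nonneg hk0.le (by linarith : (0:ℝ) ≤ 1 - Real.sin θ)) hs0]
        exact h1.trans (mul_le_mul_of_nonneg_left hkD hco)
      have : (1 - Real.sin θ) / Real.sqrt ((1 - k^2) + k^2 * Real.cos θ ^ 2)
          ≤ Real.cos θ / k := by
        rw [div_le_div_iff₀ hsD hk0]
        nlinarith
      have hsplit : 1 / Real.sqrt ((1 - k^2) + k^2 * Real.cos θ ^ 2)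
          = Real.sin θ / Real.sqrt ((1 - k^2) + k^2 * Real.cos θ ^ 2)
          + (1 - Real.sin θ) / Real.sqrt ((1 - k^2) + k^2 * Real.cos θ ^ 2) := by
        field_simp
        ring
      rw [hsplit]
      linarith
    have hint2 : IntervalIntegrable (fun θ =>
        Real.sin θ / Real.sqrt ((1 - k^2) + k^2 * Real.cos θ ^ 2) + Real.cos θ / k)
        MeasureTheory.volume 0 (π/2) :=
      (hcont2.add (Real.continuous_cos.div_const k)).intervalIntegrable _ _
    have := intervalIntegral.integral_mono_on (by positivity : (0:ℝ) ≤ π/2)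
      (hcont1.intervalIntegrable _ _) hint2 hub
    rw [intervalIntegral.integral_add (hcont2.intervalIntegrable _ _)
      ((Real.continuous_cos.div_const k).intervalIntegrable _ _), hval] at this
    have hcosint : (∫ θ in (0:ℝ)..(π/2), Real.cos θ / k) = 1/k := by
      rw [intervalIntegral.integral_div, integral_cos]
      simp
    rw [hcosint] at this
    exact this

lemma arsinh_val {k : ℝ} (hk0 : 0 < k) (hk1 : k < 1) :
    Real.arsinh (k / Real.sqrt (1 - k^2))
      = Real.log ((1 + k) / Real.sqrt (1 - k^2)) := by
  have he : (0:ℝ) < 1 - k^2 := by nlinarith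
  set c := Real.sqrt (1 - k^2) with hc_def
  have hc : 0 < c := Real.sqrt_pos.2 he
  have hc2 : c^2 = 1 - k^2 := Real.sq_sqrt he.le
  rw [Real.arsinh]
  congr 1
  have h4 : 1 + (k/c)^2 = (1/c)^2 := by
    field_simp [hc2]
    linarith [hc2]
  rw [h4, Real.sqrt_sq (by positivity)]
  field_simp
  ring

lemma ellK_abs_bound {k : ℝ} (hk : k ∈ Set.Ioo (1/2 : ℝ) 1) :
    |EllK k - Real.log (4 / Real.sqrt (1 - k^2))| ≤ 10 := by
  obtain ⟨hk2, hk1⟩ := hk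
  have hk0 : (0:ℝ) < k := by linarith
  have he : (0:ℝ) < 1 - k^2 := by nlinarith
  obtain ⟨c, hc_def⟩ : ∃ c, c = Real.sqrt (1 - k^2) := ⟨_, rfl⟩
  have hc : 0 < c := hc_def ▸ Real.sqrt_pos.2 he
  have hc2 : c^2 = 1 - k^2 := hc_def ▸ Real.sq_sqrt he.le
  have hc1 : c ≤ 1 := by nlinarith [hc2, hc, sq_nonneg k]
  obtain ⟨hlow, hup⟩ := ellK_bounds hk0 hk1
  rw [arsinh_val hk0 hk1] at hlow hup
  rw [← hc_def] at hlow hup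
  obtain ⟨A, hA_def⟩ : ∃ A, A = Real.log ((1 + k) / c) := ⟨_, rfl⟩
  obtain ⟨L, hL_def⟩ : ∃ L, L = Real.log (4 / c) := ⟨_, rfl⟩
  rw [← hA_def] at hlow hup
  rw [show Real.log (4 / Real.sqrt (1 - k^2)) = L by rw [hL_def, hc_def]]
  have hA0 : 0 ≤ A := hA_def ▸ Real.log_nonneg (by rw [le_div_iff₀ hc]; linarith)
  have hAL : A ≤ L := by
    rw [hA_def, hL_def]
    apply Real.log_le_log (by positivity)
    gcongr
    linarith
  have hlogc : -Real.log c ≤ 1/c := by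
    have := Real.log_le_sub_one_of_pos (show (0:ℝ) < 1/c by positivity)
    rw [Real.log_div one_ne_zero hc.ne', Real.log_one] at this
    linarith
  have hA_split : A = Real.log (1 + k) - Real.log c := by
    rw [hA_def]; exact Real.log_div (by linarith) hc.ne'
  have hL_split : L = Real.log 4 - Real.log c := by
    rw [hL_def]; exact Real.log_div (by norm_num) hc.ne'
  have hlog2 : Real.log (1 + k) ≤ 1 := by
    have := Real.log_le_sub_one_of_pos (show (0:ℝ) < 1 + k by linarith)
    linarith
  have hlog4 : Real.log 4 ≤ 3 := by
    have := Real.log_le_sub_one_of_pos (show (0:ℝ) < 4 by norm_num)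
    linarith
  have hlog1k : 0 ≤ Real.log (1 + k) := Real.log_nonneg (by linarith)
  -- lower : EllK k ≥ A ≥ L - 3
  have hk1' : (1:ℝ) ≤ 1/k := by rw [le_div_iff₀ hk0]; linarith
  have h1 : A ≤ EllK k := by
    have : A ≤ (1/k) * A := by nlinarith
    linarith
  have hkinv : 1/k ≤ 2 := by rw [div_le_iff₀ hk0]; linarith
  have hfrac : 1/k ≤ 1 + 2*(1-k^2) := by
    rw [div_le_iff₀ hk0]
    nlinarith [mul_nonneg (show (0:ℝ) ≤ 1 - k by linarith)
      (show (0:ℝ) ≤ 2*k^2 + 2*k - 1 by nlinarith)]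
  have hAub : A ≤ 1 + 1/c := by rw [hA_split]; linarith
  have hcA : c * A ≤ c + 1 := by
    calc c * A ≤ c * (1 + 1/c) := mul_le_mul_of_nonneg_left hAub hc.le
    _ = c + 1 := by field_simp
  have h2cle : (0:ℝ) ≤ 2*c := by linarith
  have h2c : (2*c^2) * A ≤ 4 := by
    nlinarith [mul_le_mul_of_nonneg_left hcA h2cle]
  have hup2 : EllK k ≤ A + 4 + 2 := by
    have h3 : (1/k) * A ≤ (1 + 2*c^2) * A := by
      apply mul_le_mul_of_nonneg_right _ hA0
      rw [hc2]; exact hfrac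
    nlinarith
  rw [abs_le]
  constructor
  · linarith
  · linarith


lemma tendsto_quot {l : Filter ℝ} {u L : ℝ → ℝ} (hb : ∀ᶠ k in l, |u k - L k| ≤ 10)
    (hL : Filter.Tendsto L l Filter.atTop) :
    Filter.Tendsto (fun k => u k / L k) l (nhds 1) := by
  have h0 : Filter.Tendsto (fun k => (u k - L k) / L k) l (nhds 0) := by
    apply squeeze_zero_norm' (a := fun k => 10 / L k)
    · filter_upwards [hb, hL.eventually_ge_atTop 1] with k h1 h2
      rw [Real.norm_eq_abs, abs_div, abs_of_nonneg (by linarith : (0:ℝ) ≤ L k)]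
      gcongr
    · exact Filter.Tendsto.div_atTop tendsto_const_nhds hL
  have h2 : Filter.Tendsto (fun k => (u k - L k) / L k + 1) l (nhds (0 + 1)) :=
    h0.add tendsto_const_nhds
  rw [zero_add] at h2
  apply h2.congr'
  filter_upwards [hL.eventually_ge_atTop 1] with k hk
  have hne : L k ≠ 0 := by linarith
  field_simp
  ring

theorem stmt_9 :
    Filter.Tendsto (fun k : ℝ => EllK k / Real.log (4 / Real.sqrt (1 - k^2)))
      (nhdsWithin 1 (Set.Iio (1:ℝ))) (nhds 1) := by
  have hev : Set.Ioo (1/2:ℝ) 1 ∈ nhdsWithin 1 (Set.Iio (1:ℝ)) :=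
    Ioo_mem_nhdsLT_of_mem (by norm_num)
  apply tendsto_quot
  · exact Filter.eventually_of_mem hev fun k hk => ellK_abs_bound hk
  · have hsq : Filter.Tendsto (fun k : ℝ => Real.sqrt (1 - k^2))
        (nhdsWithin 1 (Set.Iio (1:ℝ))) (nhdsWithin 0 (Set.Ioi 0)) := by
      rw [tendsto_nhdsWithin_iff]
      constructor
      · have hcont : Continuous fun k : ℝ => Real.sqrt (1 - k^2) :=
          (continuous_const.sub (continuous_pow 2)).sqrt
        have := hcont.tendsto' 1 0 (by norm_num)
        exact this.mono_left nhdsWithin_le_nhds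
      · exact Filter.eventually_of_mem hev fun k hk =>
          Real.sqrt_pos.2 (by nlinarith [hk.1, hk.2])
    have hlog : Filter.Tendsto (fun k : ℝ => Real.log (Real.sqrt (1 - k^2)))
        (nhdsWithin 1 (Set.Iio (1:ℝ))) Filter.atBot :=
      Real.tendsto_log_nhdsGT_zero.comp hsq
    have hneg : Filter.Tendsto (fun k : ℝ => Real.log 4 + -Real.log (Real.sqrt (1 - k^2)))
        (nhdsWithin 1 (Set.Iio (1:ℝ))) Filter.atTop :=
      Filter.tendsto_atTop_add_const_left _ _ (Filter.tendsto_neg_atTop_iff.mpr hlog)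
    apply hneg.congr'
    filter_upwards [hev] with k hk
    have hcpos : (0:ℝ) < Real.sqrt (1 - k^2) :=
      Real.sqrt_pos.2 (by nlinarith [hk.1, hk.2])
    rw [Real.log_div (by norm_num) hcpos.ne']
    ring
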